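/- arXiv:math/0308242 — 2 statements merged into one kernel-verified Lean document; each statement's English description precedes it below -/
import Mathlib

section
/- Let f : ℝ → ℝ be twice differentiable with f''(x) = x·f(x) for all x, and suppose f(x) → 0 and f'(x) → 0 as x → ∞. Then for every a ∈ ℝ, ∫ₐ^∞ f(x)² dx = f'(a)² − a·f(a)². -/
open MeasureTheory Filter Set

theorem stmt_2 (f : ℝ → ℝ) (hf : Differentiable ℝ f)
    (hf' : Differentiable ℝ (deriv f))
    (hAiry : ∀ x, deriv (deriv f) x = x * f x)
    (hlim : Filter.Tendsto f Filter.atTop (nhds 0))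
    (hlim' : Filter.Tendsto (deriv f) Filter.atTop (nhds 0)) :
    ∀ a : ℝ, ∫ x in Set.Ioi a, (f x) ^ 2 = (deriv f a) ^ 2 - a * (f a) ^ 2 := by
  -- derivative facts
  have hk : ∀ x : ℝ, HasDerivAt (fun x => f x * deriv f x)
      ((deriv f x) ^ 2 + x * f x ^ 2) x := by
    intro x
    have := ((hf x).hasDerivAt.mul (hf' x).hasDerivAt)
    refine this.congr_deriv ?_
    rw [hAiry x]; ring
  have hh : ∀ x : ℝ, HasDerivAt (fun x => x * f x ^ 2 - (deriv f x) ^ 2)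
      (f x ^ 2) x := by
    intro x
    have h1 : HasDerivAt (fun x : ℝ => x * f x ^ 2)
        (1 * f x ^ 2 + x * (2 * f x ^ 1 * deriv f x)) x :=
      (hasDerivAt_id x).mul ((hf x).hasDerivAt.pow 2)
    have h2 : HasDerivAt (fun x => (deriv f x) ^ 2)
        (2 * deriv f x ^ 1 * deriv (deriv f) x) x := (hf' x).hasDerivAt.pow 2
    have := h1.sub h2
    refine this.congr_deriv ?_
    rw [hAiry x]; ring
  -- k = f * f' tends to 0
  have hk0 : Tendsto (fun x => f x * deriv f x) atTop (nhds 0) := by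
    simpa using hlim.mul hlim'
  -- integrability of f'^2 + x f^2 on Ioi 1
  have hint : IntegrableOn (fun x => (deriv f x) ^ 2 + x * f x ^ 2) (Ioi (1:ℝ)) := by
    refine integrableOn_Ioi_deriv_of_nonneg' (fun x _ => hk x) (fun x hx => ?_) hk0
    have : (0:ℝ) < x := lt_trans one_pos hx
    positivity
  -- hence f^2 integrable on Ioi 1
  have hintf : IntegrableOn (fun x => f x ^ 2) (Ioi (1:ℝ)) := by
    refine hint.mono' ((hf.continuous.pow 2).aestronglyMeasurable) ?_
    filter_upwards [ae_restrict_mem measurableSet_Ioi] with x hx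
    have h1 : (1:ℝ) ≤ x := le_of_lt hx
    have : |f x ^ 2| = f x ^ 2 := abs_of_nonneg (sq_nonneg _)
    rw [Real.norm_eq_abs, this]
    nlinarith [sq_nonneg (f x), sq_nonneg (deriv f x)]
  -- h monotone
  set h : ℝ → ℝ := fun x => x * f x ^ 2 - (deriv f x) ^ 2 with hhdef
  have hmono : Monotone h := by
    apply monotone_of_deriv_nonneg
    · exact fun x => (hh x).differentiableAt
    · intro x; rw [(hh x).deriv]; exact sq_nonneg _
  -- h bounded above
  have hbdd : BddAbove (Set.range h) := by
    refine ⟨h 1 + ∫ x in Ioi (1:ℝ), f x ^ 2, ?_⟩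
    rintro _ ⟨x, rfl⟩
    rcases le_or_gt x 1 with hx | hx
    · have := hmono hx
      have : h x ≤ h 1 := this
      have hnn : 0 ≤ ∫ x in Ioi (1:ℝ), f x ^ 2 :=
        setIntegral_nonneg measurableSet_Ioi fun y _ => sq_nonneg _
      linarith
    · have heq : ∫ t in (1:ℝ)..x, f t ^ 2 = h x - h 1 := by
        apply intervalIntegral.integral_eq_sub_of_hasDerivAt
        · intro t _; exact hh t
        · rw [intervalIntegrable_iff_integrableOn_Ioc_of_le hx.le]
          exact hintf.mono_set Ioc_subset_Ioi_self
      have hle : ∫ t in (1:ℝ)..x, f t ^ 2 ≤ ∫ t in Ioi (1:ℝ), f t ^ 2 := by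
        rw [intervalIntegral.integral_of_le hx.le]
        apply setIntegral_mono_set hintf
        · filter_upwards with y using sq_nonneg _
        · exact HasSubset.Subset.eventuallyLE Ioc_subset_Ioi_self
      linarith
  -- h tends to L
  obtain ⟨L, hL⟩ : ∃ L, Tendsto h atTop (nhds L) :=
    ⟨_, tendsto_atTop_ciSup hmono hbdd⟩
  -- x f^2 tends to L
  have hxf2 : Tendsto (fun x => x * f x ^ 2) atTop (nhds L) := by
    have := hL.add (hlim'.pow 2)
    simpa [hhdef] using this
  -- L ≥ 0
  have hL0 : 0 ≤ L := by
    refine ge_of_tendsto hxf2 ?_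
    filter_upwards [eventually_ge_atTop (0:ℝ)] with x hx
    positivity
  -- L = 0 by contradiction
  have hLeq : L = 0 := by
    by_contra hne
    have hLpos : 0 < L := lt_of_le_of_ne hL0 (Ne.symm hne)
    -- eventually x * f x ^ 2 ≥ L / 2, so f x ^2 ≥ (L/2) / x
    have hev : ∀ᶠ x in atTop, L / 2 ≤ x * f x ^ 2 :=
      hxf2.eventually (eventually_ge_nhds (by linarith))
    obtain ⟨N, hN⟩ := (hev.and (eventually_ge_atTop (1:ℝ))).exists_forall_of_atTop
    set M := max N 1 with hM
    have hM1 : (1:ℝ) ≤ M := le_max_right _ _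
    have hint2 : IntegrableOn (fun x => L / 2 * x⁻¹) (Ioi M) := by
      refine (hintf.mono_set (Ioi_subset_Ioi hM1)).mono'
        ((measurable_const.mul measurable_inv).aestronglyMeasurable) ?_
      filter_upwards [ae_restrict_mem measurableSet_Ioi] with x hx
      have hx1 : (1:ℝ) < x := lt_of_le_of_lt hM1 hx
      have hxN : N ≤ x := le_trans (le_max_left _ _) hx.le
      obtain ⟨h1, h2⟩ := hN x hxN
      have hxpos : (0:ℝ) < x := lt_trans one_pos hx1
      rw [Real.norm_eq_abs, abs_of_nonneg (by positivity)]
      calc L / 2 * x⁻¹ ≤ x * f x ^ 2 * x⁻¹ := by gcongr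
        _ = f x ^ 2 := by field_simp
    have : IntegrableOn (fun x => x⁻¹) (Ioi M) := by
      refine (hint2.const_mul (2 / L)).congr ?_
      filter_upwards with x
      field_simp
    have hnot : ¬ IntegrableOn (fun x => x⁻¹) (Ioi M) := by
      intro hc
      have := integrableOn_Ioi_rpow_iff (lt_of_lt_of_le one_pos hM1) (s := -1)
      simp only [Real.rpow_neg_one] at this
      rw [this] at hc
      linarith
    exact hnot this
  -- conclude
  intro a
  have := integral_Ioi_of_hasDerivAt_of_nonneg' (a := a) (g := h)
    (g' := fun x => f x ^ 2) (fun x _ => hh x) (fun x _ => sq_nonneg _)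
    (hLeq ▸ hL)
  rw [this, hhdef]
  ring
end

section
/- Let 0 < θ ≤ 1 and ν ≥ 0, and let Ω : ℝ₊ → ℝ₊ satisfy Ω(y) ≥ θ y for y ∈ [0,1] and Ω(y) ≤ 6 e^{−y} for all y ≥ 0. Then for every λ ∈ (0,1] and every Γ ≥ 1: ∫₀^∞ Ω(y) min{λ y e^{−aΓ}, e^{−a λ y Γ^{1/3}}} e^{−ν y} dy ≤ C e^{−a Γ^{1/3}} ∫₀^∞ Ω(y) Ω(λ y) e^{−ν y} dy, for constants a > 0 and C depending only on θ and a. -/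
open MeasureTheory

set_option maxHeartbeats 1600000 in
theorem stmt_16 (θ : ℝ) (hθ0 : 0 < θ) (hθ1 : θ ≤ 1) :
    ∃ a > (0:ℝ), ∃ C > (0:ℝ),
      ∀ (ν : ℝ), 0 ≤ ν → ∀ (Ω : ℝ → ℝ),
        (∀ y ∈ Set.Icc (0:ℝ) 1, θ * y ≤ Ω y) →
        (∀ y : ℝ, 0 ≤ y → 0 ≤ Ω y ∧ Ω y ≤ 6 * Real.exp (-y)) →
        ∀ lam : ℝ, 0 < lam → lam ≤ 1 → ∀ Γ : ℝ, 1 ≤ Γ →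
          (∫ y in Set.Ioi (0:ℝ),
              Ω y * min (lam * y * Real.exp (-a * Γ))
                (Real.exp (-a * lam * y * Γ ^ ((1:ℝ)/3))) * Real.exp (-ν * y))
            ≤ C * Real.exp (-a * Γ ^ ((1:ℝ)/3)) *
              ∫ y in Set.Ioi (0:ℝ), Ω y * Ω (lam * y) * Real.exp (-ν * y) := by
  refine ⟨1, one_pos, 1/θ + 72/θ^2, by positivity, ?_⟩
  intro ν hν Ω hΩlow hΩup lam hlam0 hlam1 Γ hΓ
  set K := Γ ^ ((1:ℝ)/3) with hKdef
  have hΓ0 : (0:ℝ) < Γ := by linarith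
  have hK1 : 1 ≤ K := Real.one_le_rpow hΓ (by norm_num)
  have hKΓ : K ≤ Γ := by
    calc K = Γ ^ ((1:ℝ)/3) := rfl
    _ ≤ Γ ^ (1:ℝ) := Real.rpow_le_rpow_of_exponent_le hΓ (by norm_num)
    _ = Γ := Real.rpow_one Γ
  set E := Real.exp (-K) with hEdef
  have hE0 : 0 < E := Real.exp_pos _
  set m : ℝ → ℝ := fun y => min (lam * y * Real.exp (-1 * Γ))
      (Real.exp (-1 * lam * y * K)) with hmdef
  set f : ℝ → ℝ := fun y => Ω y * m y * Real.exp (-ν * y) with hfdef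
  set g : ℝ → ℝ := fun y => Ω y * Ω (lam * y) * Real.exp (-ν * y) with hgdef
  have hg_nonneg : ∀ y ∈ Set.Ioi (0:ℝ), 0 ≤ g y := by
    intro y hy
    have hy0 : (0:ℝ) ≤ y := (le_of_lt hy)
    have h1 := (hΩup y hy0).1
    have h2 := (hΩup (lam * y) (by positivity)).1
    have := Real.exp_pos (-ν * y)
    positivity
  by_cases hfi : IntegrableOn f (Set.Ioi (0:ℝ)) volume
  · -- main case
    -- measurability of Ω on Ioi 0
    have hmeas_me : Measurable (fun y : ℝ => m y * Real.exp (-ν * y)) := by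
      apply Measurable.mul
      · exact Measurable.min (by fun_prop) (by fun_prop)
      · fun_prop
    have hfaem : AEMeasurable f (volume.restrict (Set.Ioi (0:ℝ))) :=
      hfi.aemeasurable
    have hm_pos : ∀ y : ℝ, 0 < y → 0 < m y := by
      intro y hy
      apply lt_min
      · have := Real.exp_pos (-1 * Γ); positivity
      · exact Real.exp_pos _
    have hΩaem : AEMeasurable Ω (volume.restrict (Set.Ioi (0:ℝ))) := by
      have hdiv : AEMeasurable (fun y => f y / (m y * Real.exp (-ν * y)))
          (volume.restrict (Set.Ioi (0:ℝ))) :=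
        hfaem.div hmeas_me.aemeasurable
      apply hdiv.congr
      rw [Filter.EventuallyEq, ae_restrict_iff' measurableSet_Ioi]
      filter_upwards with y hy
      have hme : m y * Real.exp (-ν * y) ≠ 0 :=
        ne_of_gt (mul_pos (hm_pos y hy) (Real.exp_pos _))
      show (Ω y * m y * Real.exp (-ν * y)) / (m y * Real.exp (-ν * y)) = Ω y
      rw [mul_assoc]
      exact mul_div_cancel_right₀ _ hme
    have qmp : Measure.QuasiMeasurePreserving (fun y : ℝ => lam * y)
        (volume.restrict (Set.Ioi (0:ℝ))) (volume.restrict (Set.Ioi (0:ℝ))) := by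
      refine ⟨measurable_const_mul lam, Measure.AbsolutelyContinuous.mk ?_⟩
      intro s hs h0
      rw [Measure.restrict_apply hs] at h0
      rw [Measure.map_apply (measurable_const_mul lam) hs,
        Measure.restrict_apply ((measurable_const_mul lam) hs)]
      have hset : (fun y : ℝ => lam * y) ⁻¹' s ∩ Set.Ioi 0
          = (fun y : ℝ => lam * y) ⁻¹' (s ∩ Set.Ioi 0) := by
        ext x
        simp only [Set.mem_inter_iff, Set.mem_preimage, Set.mem_Ioi]
        constructor
        · rintro ⟨h1, h2⟩; exact ⟨h1, by positivity⟩
        · rintro ⟨h1, h2⟩; exact ⟨h1, by nlinarith⟩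
      rw [hset, ← Measure.map_apply (measurable_const_mul lam)
        (hs.inter measurableSet_Ioi)]
      rw [show (fun y : ℝ => lam * y) = (fun y : ℝ => lam * y) from rfl,
        Real.map_volume_mul_left (ne_of_gt hlam0), Measure.smul_apply, h0,
        smul_zero]
    have hΩlamaem : AEMeasurable (fun y => Ω (lam * y))
        (volume.restrict (Set.Ioi (0:ℝ))) := by
      have := hΩaem.comp_quasiMeasurePreserving qmp
      exact this
    have hgaem : AEMeasurable g (volume.restrict (Set.Ioi (0:ℝ))) := by
      exact ((hΩaem.mul hΩlamaem).mul (by fun_prop : AEMeasurable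
        (fun y : ℝ => Real.exp (-ν * y)) (volume.restrict (Set.Ioi (0:ℝ)))))
    have hgi : IntegrableOn g (Set.Ioi (0:ℝ)) volume := by
      apply Integrable.mono' ((exp_neg_integrableOn_Ioi 0 one_pos).const_mul 36)
        hgaem.aestronglyMeasurable
      rw [ae_restrict_iff' measurableSet_Ioi]
      filter_upwards with y hy
      have hy0 : (0:ℝ) ≤ y := le_of_lt hy
      have h1 := hΩup y hy0
      have h2 := hΩup (lam * y) (by positivity)
      have he1 : Real.exp (-(lam * y)) ≤ 1 := Real.exp_le_one_iff.2 (by nlinarith)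
      have he2 : Real.exp (-ν * y) ≤ 1 := Real.exp_le_one_iff.2 (by nlinarith)
      have he3 : (0:ℝ) < Real.exp (-ν * y) := Real.exp_pos _
      have he4 : (0:ℝ) < Real.exp (-y) := Real.exp_pos _
      rw [Real.norm_eq_abs, abs_of_nonneg (hg_nonneg y hy)]
      show Ω y * Ω (lam * y) * Real.exp (-ν * y) ≤ 36 * Real.exp (-1 * y)
      rw [show (-1 : ℝ) * y = -y by ring]
      have b1 : Ω (lam * y) ≤ 6 := by nlinarith [h2.2, Real.exp_pos (-(lam*y))]
      calc Ω y * Ω (lam * y) * Real.exp (-ν * y)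
          ≤ (6 * Real.exp (-y)) * 6 * 1 := by
            apply mul_le_mul (mul_le_mul h1.2 b1 h2.1 (by positivity)) he2
              he3.le (by positivity)
      _ = 36 * Real.exp (-y) := by ring
    -- the majorant
    set T : ℝ → ℝ := Set.indicator (Set.Ioi (1/lam))
        (fun y => 6 * E * Real.exp (-ν) * Real.exp (-y)) with hTdef
    set h : ℝ → ℝ := fun y => 1/θ * E * g y + T y with hhdef
    have hTi : IntegrableOn T (Set.Ioi (0:ℝ)) volume := by
      apply Integrable.indicator _ measurableSet_Ioi
      have : IntegrableOn (fun y : ℝ => Real.exp (-1 * y)) (Set.Ioi (0:ℝ)) volume :=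
        exp_neg_integrableOn_Ioi 0 one_pos
      have := this.const_mul (6 * E * Real.exp (-ν))
      simpa using this
    have hhi : IntegrableOn h (Set.Ioi (0:ℝ)) volume :=
      (hgi.const_mul _).add hTi
    have hfh : ∀ y ∈ Set.Ioi (0:ℝ), f y ≤ h y := by
      intro y hy
      have hy0 : 0 < y := hy
      have hΩy0 : 0 ≤ Ω y := (hΩup y hy0.le).1
      have hey : (0:ℝ) < Real.exp (-ν * y) := Real.exp_pos _
      by_cases hc : y ≤ 1/lam
      · have hT0 : T y = 0 := by
          rw [hTdef, Set.indicator_of_notMem]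
          simp only [Set.mem_Ioi, not_lt]; exact hc
        have hly1 : lam * y ≤ 1 := by
          rw [div_eq_mul_inv, one_mul] at hc
          calc lam * y ≤ lam * lam⁻¹ := by
                exact mul_le_mul_of_nonneg_left hc hlam0.le
          _ = 1 := mul_inv_cancel₀ (ne_of_gt hlam0)
        have hΩl : θ * (lam * y) ≤ Ω (lam * y) :=
          hΩlow (lam * y) ⟨by positivity, hly1⟩
        have hexpΓ : Real.exp (-1 * Γ) ≤ E := by
          rw [hEdef]
          exact Real.exp_le_exp.2 (by linarith)
        have step1 : f y ≤ Ω y * (lam * y * E) * Real.exp (-ν * y) := by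
          rw [hfdef]
          have : m y ≤ lam * y * E := by
            calc m y ≤ lam * y * Real.exp (-1 * Γ) := min_le_left _ _
            _ ≤ lam * y * E := by
                apply mul_le_mul_of_nonneg_left hexpΓ (by positivity)
          exact mul_le_mul_of_nonneg_right
            (mul_le_mul_of_nonneg_left this hΩy0) hey.le
        have step2 : Ω y * (lam * y * E) * Real.exp (-ν * y)
            ≤ 1/θ * E * g y := by
          rw [hgdef]
          have key : Ω y * (lam * y) * Real.exp (-ν * y)
              ≤ 1/θ * (Ω y * Ω (lam * y) * Real.exp (-ν * y)) := by
            have h1 : Ω y * (θ * (lam * y)) * Real.exp (-ν * y)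
                ≤ Ω y * Ω (lam * y) * Real.exp (-ν * y) :=
              mul_le_mul_of_nonneg_right
                (mul_le_mul_of_nonneg_left hΩl hΩy0) hey.le
            have hθne : θ ≠ 0 := ne_of_gt hθ0
            calc Ω y * (lam * y) * Real.exp (-ν * y)
                = 1/θ * (Ω y * (θ * (lam * y)) * Real.exp (-ν * y)) := by
                  field_simp
            _ ≤ 1/θ * (Ω y * Ω (lam * y) * Real.exp (-ν * y)) := by
                  exact mul_le_mul_of_nonneg_left h1 (by positivity)
          calc Ω y * (lam * y * E) * Real.exp (-ν * y)
              = E * (Ω y * (lam * y) * Real.exp (-ν * y)) := by ring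
          _ ≤ E * (1/θ * (Ω y * Ω (lam * y) * Real.exp (-ν * y))) := by
              exact mul_le_mul_of_nonneg_left key hE0.le
          _ = 1/θ * E * (Ω y * Ω (lam * y) * Real.exp (-ν * y)) := by ring
        show f y ≤ 1/θ * E * g y + T y
        rw [hT0, add_zero]
        exact step1.trans step2
      · push_neg at hc
        have h1lam : 1 ≤ 1/lam := by
          rw [le_div_iff₀ hlam0]; linarith
        have hy1 : 1 ≤ y := le_trans h1lam hc.le
        have hly1 : 1 ≤ lam * y := by
          rw [div_lt_iff₀ hlam0, mul_comm] at hc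
          linarith
        have hT : T y = 6 * E * Real.exp (-ν) * Real.exp (-y) := by
          rw [hTdef, Set.indicator_of_mem]
          exact hc
        have hmb : m y ≤ E := by
          calc m y ≤ Real.exp (-1 * lam * y * K) := min_le_right _ _
          _ ≤ E := by
              rw [hEdef]
              apply Real.exp_le_exp.2
              have hK0 : 0 < K := lt_of_lt_of_le one_pos hK1
              nlinarith
        have heb : Real.exp (-ν * y) ≤ Real.exp (-ν) := by
          apply Real.exp_le_exp.2
          nlinarith
        have hm0 : 0 ≤ m y := (hm_pos y hy0).le
        have hfb : f y ≤ 6 * E * Real.exp (-ν) * Real.exp (-y) := by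
          rw [hfdef]
          calc Ω y * m y * Real.exp (-ν * y)
              ≤ (6 * Real.exp (-y)) * E * Real.exp (-ν) := by
                apply mul_le_mul
                · exact mul_le_mul (hΩup y hy0.le).2 hmb hm0 (by positivity)
                · exact heb
                · exact (Real.exp_pos _).le
                · positivity
          _ = 6 * E * Real.exp (-ν) * Real.exp (-y) := by ring
        show f y ≤ 1/θ * E * g y + T y
        have : 0 ≤ 1/θ * E * g y := by
          have := hg_nonneg y hy
          positivity
        rw [hT]
        linarith
    have hint1 : (∫ y in Set.Ioi (0:ℝ), f y) ≤ ∫ y in Set.Ioi (0:ℝ), h y :=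
      setIntegral_mono_on hfi hhi measurableSet_Ioi hfh
    -- evaluate integral of h
    have hIg : (0:ℝ) ≤ ∫ y in Set.Ioi (0:ℝ), g y :=
      setIntegral_nonneg measurableSet_Ioi hg_nonneg
    set Ig := ∫ y in Set.Ioi (0:ℝ), g y with hIgdef
    have hinth : (∫ y in Set.Ioi (0:ℝ), h y)
        = 1/θ * E * Ig + 6 * E * Real.exp (-ν) * Real.exp (-(1/lam)) := by
      rw [hhdef]
      rw [integral_add (hgi.const_mul _) hTi]
      congr 1
      · rw [integral_const_mul]
      · rw [hTdef, setIntegral_indicator measurableSet_Ioi,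
          Set.Ioi_inter_Ioi]
        have hmax : max (0:ℝ) (1/lam) = 1/lam := max_eq_right (by positivity)
        rw [hmax, integral_const_mul, integral_exp_neg_Ioi]
    -- lower bound for Ig
    have hlb : θ^2 * lam * Real.exp (-ν) / 3 ≤ Ig := by
      have hsub : Set.Ioc (0:ℝ) 1 ⊆ Set.Ioi (0:ℝ) := Set.Ioc_subset_Ioi_self
      have h1 : (∫ y in Set.Ioc (0:ℝ) 1, g y) ≤ Ig := by
        apply setIntegral_mono_set hgi
        · rw [Filter.EventuallyLE, ae_restrict_iff' measurableSet_Ioi]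
          filter_upwards with y hy
          exact hg_nonneg y hy
        · exact Filter.Eventually.of_forall hsub
      have h2 : (∫ y in Set.Ioc (0:ℝ) 1, θ^2 * lam * Real.exp (-ν) * y^2)
          ≤ ∫ y in Set.Ioc (0:ℝ) 1, g y := by
        apply setIntegral_mono_on
        · exact ((continuous_const.mul (continuous_pow 2)).integrableOn_Ioc)
        · exact hgi.mono_set hsub
        · exact measurableSet_Ioc
        · intro y hy
          obtain ⟨hy0, hy1⟩ := hy
          have hΩ1 : θ * y ≤ Ω y := hΩlow y ⟨hy0.le, hy1⟩
          have hly1 : lam * y ≤ 1 := by nlinarith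
          have hΩ2 : θ * (lam * y) ≤ Ω (lam * y) :=
            hΩlow (lam * y) ⟨by positivity, hly1⟩
          have he : Real.exp (-ν) ≤ Real.exp (-ν * y) := by
            apply Real.exp_le_exp.2; nlinarith
          have hθy : 0 ≤ θ * y := by positivity
          have hθly : 0 ≤ θ * (lam * y) := by positivity
          show θ^2 * lam * Real.exp (-ν) * y^2 ≤ g y
          rw [hgdef]
          calc θ^2 * lam * Real.exp (-ν) * y^2
              = (θ * y) * (θ * (lam * y)) * Real.exp (-ν) := by ring
          _ ≤ Ω y * Ω (lam * y) * Real.exp (-ν * y) := by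
              apply mul_le_mul
              · exact mul_le_mul hΩ1 hΩ2 hθly (le_trans hθy hΩ1)
              · exact he
              · exact (Real.exp_pos _).le
              · have := le_trans hθy hΩ1
                have := le_trans hθly hΩ2
                positivity
      have h3 : (∫ y in Set.Ioc (0:ℝ) 1, θ^2 * lam * Real.exp (-ν) * y^2)
          = θ^2 * lam * Real.exp (-ν) / 3 := by
        rw [show (∫ y in Set.Ioc (0:ℝ) 1, θ^2 * lam * Real.exp (-ν) * y^2)
            = θ^2 * lam * Real.exp (-ν) * ∫ y in Set.Ioc (0:ℝ) 1, y^2 from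
            integral_const_mul _ _]
        rw [← intervalIntegral.integral_of_le (zero_le_one)]
        rw [integral_pow]
        norm_num
        ring
      linarith
    -- bound exp(-(1/lam)) ≤ 4 * lam^2
    have hexplam : Real.exp (-(1/lam)) ≤ 4 * lam^2 := by
      have hp : (0:ℝ) < 1/(2*lam) := by positivity
      have h2 : 1/(2*lam) ≤ Real.exp (1/(2*lam)) := by
        have := Real.add_one_le_exp (1/(2*lam)); linarith
      have h4 : Real.exp (1/(2*lam)) * Real.exp (1/(2*lam)) = Real.exp (1/lam) := by
        rw [← Real.exp_add]
        congr 1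
        rw [← add_div,
          div_eq_div_iff (by positivity : (0:ℝ) < 2*lam).ne' (ne_of_gt hlam0)]
        ring
      have h5 : (4*lam^2)⁻¹ ≤ Real.exp (1/lam) := by
        have h3 : 1/(2*lam) * (1/(2*lam))
            ≤ Real.exp (1/(2*lam)) * Real.exp (1/(2*lam)) :=
          mul_le_mul h2 h2 hp.le (Real.exp_pos _).le
        calc (4*lam^2)⁻¹ = 1/(2*lam) * (1/(2*lam)) := by
              rw [inv_eq_one_div]; ring
        _ ≤ _ := h3.trans_eq h4
      have h6 : (Real.exp (1/lam))⁻¹ ≤ ((4*lam^2)⁻¹)⁻¹ :=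
        inv_anti₀ (by positivity) h5
      rw [Real.exp_neg]
      calc (Real.exp (1/lam))⁻¹ ≤ ((4*lam^2)⁻¹)⁻¹ := h6
      _ = 4*lam^2 := inv_inv _
    -- combine
    have hfinal : (∫ y in Set.Ioi (0:ℝ), f y)
        ≤ (1/θ + 72/θ^2) * E * Ig := by
      have hT2 : 6 * E * Real.exp (-ν) * Real.exp (-(1/lam))
          ≤ 72/θ^2 * E * Ig := by
        have h1 : 6 * E * Real.exp (-ν) * Real.exp (-(1/lam))
            ≤ 6 * E * Real.exp (-ν) * (4 * lam^2) := by
          apply mul_le_mul_of_nonneg_left hexplam (by positivity)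
        have h2 : 24 * E * (lam^2 * Real.exp (-ν)) ≤ 24 * E * (3/θ^2 * Ig) := by
          apply mul_le_mul_of_nonneg_left _ (by positivity)
          rw [div_mul_eq_mul_div, le_div_iff₀ (by positivity)]
          nlinarith
        calc 6 * E * Real.exp (-ν) * Real.exp (-(1/lam))
            ≤ 24 * E * (lam^2 * Real.exp (-ν)) := by linarith
        _ ≤ 24 * E * (3/θ^2 * Ig) := h2
        _ = 72/θ^2 * E * Ig := by ring
      calc (∫ y in Set.Ioi (0:ℝ), f y)
          ≤ 1/θ * E * Ig + 6 * E * Real.exp (-ν) * Real.exp (-(1/lam)) := by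
            rw [← hinth]; exact hint1
      _ ≤ 1/θ * E * Ig + 72/θ^2 * E * Ig := by linarith
      _ = (1/θ + 72/θ^2) * E * Ig := by ring
    calc (∫ y in Set.Ioi (0:ℝ),
        Ω y * min (lam * y * Real.exp (-1 * Γ))
          (Real.exp (-1 * lam * y * Γ ^ ((1:ℝ)/3))) * Real.exp (-ν * y))
        = ∫ y in Set.Ioi (0:ℝ), f y := by rfl
    _ ≤ (1/θ + 72/θ^2) * E * Ig := hfinal
    _ = (1/θ + 72/θ^2) * Real.exp (-1 * Γ ^ ((1:ℝ)/3)) *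
          ∫ y in Set.Ioi (0:ℝ), Ω y * Ω (lam * y) * Real.exp (-ν * y) := by
        rw [hEdef, hIgdef, hKdef, neg_one_mul]
  · -- f not integrable: LHS is 0
    have hL : (∫ y in Set.Ioi (0:ℝ), f y) = 0 := integral_undef hfi
    calc (∫ y in Set.Ioi (0:ℝ),
        Ω y * min (lam * y * Real.exp (-1 * Γ))
          (Real.exp (-1 * lam * y * Γ ^ ((1:ℝ)/3))) * Real.exp (-ν * y))
        = 0 := hL
    _ ≤ (1/θ + 72/θ^2) * Real.exp (-1 * Γ ^ ((1:ℝ)/3)) *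
          ∫ y in Set.Ioi (0:ℝ), Ω y * Ω (lam * y) * Real.exp (-ν * y) := by
        apply mul_nonneg (by positivity)
        exact setIntegral_nonneg measurableSet_Ioi hg_nonneg
end
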